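/- arXiv:0804.0813 — 2 statements merged into one kernel-verified Lean document; each statement's English description precedes it below -/
import Mathlib

section
/- For α > 2, δ = 2/α, g > 0 and λ > 0, the double integral 2πλ ∫₀^∞ ∫_{(ρ/g)^{1/α}}^∞ r (r^{-α} ρ)² e^{-ρ} dr dρ equals (π Γ(δ+1) λ/(α-1)) · g^{2-δ}. -/
open Real MeasureTheory Set

/-- variance of the aggregate secondary interference:
`2πλ ∫₀^∞ ∫_{(ρ/g)^{1/α}}^∞ r (r^{-α} ρ)² e^{-ρ} dr dρ = (π Γ(δ+1) λ/(α-1)) g^{2-δ}`. -/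
theorem variance_secondary_interference
    (α g lam δ : ℝ) (hα : 2 < α) (hg : 0 < g) (hlam : 0 < lam) (hδ : δ = 2 / α) :
    2 * π * lam * ∫ ρ in Ioi (0 : ℝ), ∫ r in Ioi ((ρ / g) ^ (1 / α)),
        r * (r ^ (-α) * ρ) ^ 2 * Real.exp (-ρ)
      = π * Real.Gamma (δ + 1) * lam / (α - 1) * g ^ (2 - δ) := by
  have hα0 : (0:ℝ) < α := by linarith
  have hαne : α ≠ 0 := ne_of_gt hα0
  have hδ0 : 0 < δ := by rw [hδ]; positivity
  have key : ∀ ρ ∈ Ioi (0:ℝ),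
      (∫ r in Ioi ((ρ / g) ^ (1 / α)), r * (r ^ (-α) * ρ) ^ 2 * Real.exp (-ρ))
      = g ^ (2 - δ) / (2*α - 2) * (Real.exp (-ρ) * ρ ^ δ) := by
    intro ρ hρ
    have hρ0 : 0 < ρ := hρ
    set a := (ρ / g) ^ (1 / α) with ha
    have hρg : 0 < ρ / g := div_pos hρ0 hg
    have ha0 : 0 < a := Real.rpow_pos_of_pos hρg _
    have hcongr : EqOn (fun r => r * (r ^ (-α) * ρ) ^ 2 * Real.exp (-ρ))
        (fun r => (ρ^2 * Real.exp (-ρ)) * r ^ (1 - 2*α)) (Ioi a) := by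
      intro r hr
      have hr0 : 0 < r := lt_trans ha0 hr
      simp only []
      rw [mul_pow, ← Real.rpow_natCast (r ^ (-α)) 2, ← Real.rpow_mul hr0.le]
      rw [show (1 : ℝ) - 2*α = 1 + (-α * 2) by ring, Real.rpow_add hr0,
        Real.rpow_one]
      push_cast
      ring
    rw [setIntegral_congr_fun measurableSet_Ioi hcongr, integral_const_mul,
      integral_Ioi_rpow_of_lt (by linarith) ha0]
    have haval : a ^ ((1:ℝ) - 2*α + 1) = ρ ^ (δ - 2) * g ^ (2 - δ) := by
      rw [ha, ← Real.rpow_mul hρg.le]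
      have : (1 / α) * ((1:ℝ) - 2*α + 1) = δ - 2 := by
        rw [hδ]; field_simp; ring
      rw [this, Real.div_rpow hρ0.le hg.le, div_eq_mul_inv,
        ← Real.rpow_neg hg.le]
      ring_nf
    rw [haval]
    have hρδ : ρ ^ (2:ℕ) * ρ ^ (δ - 2) = ρ ^ δ := by
      rw [← Real.rpow_natCast ρ 2, ← Real.rpow_add hρ0]
      norm_num
    rw [show (1:ℝ) - 2*α + 1 = -(2*α - 2) by ring, div_neg, neg_div, neg_neg]
    rw [← hρδ]; push_cast; ring
  rw [setIntegral_congr_fun measurableSet_Ioi key, integral_const_mul]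
  have hG : Real.Gamma (δ + 1) = ∫ x in Ioi (0:ℝ), Real.exp (-x) * x ^ δ := by
    rw [Real.Gamma_eq_integral (by linarith : (0:ℝ) < δ + 1)]
    norm_num
  rw [← hG]
  have h1 : (2:ℝ)*α - 2 ≠ 0 := by nlinarith
  have h2 : α - 1 ≠ 0 := by nlinarith
  field_simp
end

section
/- Let γ(L, x) denote the lower incomplete gamma function and fix constants c₂ > 0, L ≥ 1 a natural number. Then the function P(λ) = E[γ(L, c₂ λ W^{-δ})] / Γ(L), where 0 < δ < 1 and W is a positive random variable with E[W^{-δL}] < ∞, satisfies P(λ) = (c₂^L E[W^{-δL}] / Γ(L+1)) λ^L + O(λ^{L+1}) as λ → 0⁺. -/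
open MeasureTheory ProbabilityTheory Set Filter Asymptotics Real Topology

/-- The lower incomplete gamma function `γ(s, x) = ∫₀^x t^{s-1} e^{-t} dt`. -/
noncomputable def lowerIncGamma (s x : ℝ) : ℝ :=
  ∫ t in Ioo (0 : ℝ) x, t ^ (s - 1) * Real.exp (-t)

lemma lig_nonneg (s x : ℝ) : 0 ≤ lowerIncGamma s x := by
  apply setIntegral_nonneg measurableSet_Ioo
  intro t ht
  exact mul_nonneg (Real.rpow_nonneg ht.1.le _) (Real.exp_pos _).le

lemma lig_of_nonpos (s : ℝ) {x : ℝ} (hx : x ≤ 0) : lowerIncGamma s x = 0 := by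
  unfold lowerIncGamma
  rw [Ioo_eq_empty (by intro h; linarith), Measure.restrict_empty, integral_zero_measure]

lemma lig_eq (n : ℕ) (x : ℝ) (hx : 0 ≤ x) :
    lowerIncGamma ((n : ℝ) + 1) x = ∫ t in (0:ℝ)..x, t ^ n * Real.exp (-t) := by
  rw [lowerIncGamma, intervalIntegral.integral_of_le hx, integral_Ioc_eq_integral_Ioo]
  apply setIntegral_congr_fun measurableSet_Ioo
  intro t ht
  have h : ((n:ℝ) + 1) - 1 = ((n : ℕ) : ℝ) := by push_cast; ring
  simp only [h, Real.rpow_natCast]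

lemma lig_le (n : ℕ) (x : ℝ) (hx : 0 ≤ x) :
    lowerIncGamma ((n:ℝ) + 1) x ≤ x ^ (n+1) / (n+1) := by
  rw [lig_eq n x hx]
  have h1 : (∫ t in (0:ℝ)..x, t ^ n) = x ^ (n+1) / ((n:ℝ)+1) := by
    rw [integral_pow]; push_cast; ring
  calc (∫ t in (0:ℝ)..x, t ^ n * Real.exp (-t)) ≤ ∫ t in (0:ℝ)..x, t ^ n := by
        apply intervalIntegral.integral_mono_on hx
        · exact Continuous.intervalIntegrable (by continuity) _ _
        · exact (continuous_pow n).intervalIntegrable _ _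
        · intro t ht
          have : Real.exp (-t) ≤ 1 := Real.exp_le_one_iff.mpr (by linarith [ht.1])
          exact mul_le_of_le_one_right (pow_nonneg ht.1 n) this
    _ = x ^ (n+1) / ((n:ℝ)+1) := h1
    _ = x ^ (n+1) / ((n:ℕ)+1 : ℝ) := by norm_num

lemma lig_ge (n : ℕ) (x : ℝ) (hx : 0 ≤ x) :
    x ^ (n+1) / (n+1) - x ^ (n+2) / (n+2) ≤ lowerIncGamma ((n:ℝ) + 1) x := by
  rw [lig_eq n x hx]
  have h1 : (∫ t in (0:ℝ)..x, (t ^ n - t ^ (n+1))) = x ^ (n+1)/((n:ℝ)+1) - x^(n+2)/((n:ℝ)+2) := by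
    rw [intervalIntegral.integral_sub ((continuous_pow _).intervalIntegrable _ _)
      ((continuous_pow _).intervalIntegrable _ _), integral_pow, integral_pow]
    push_cast; ring
  have h2 : (∫ t in (0:ℝ)..x, (t ^ n - t ^ (n+1))) ≤ ∫ t in (0:ℝ)..x, t ^ n * Real.exp (-t) := by
    apply intervalIntegral.integral_mono_on hx
    · exact (((continuous_pow _).sub (continuous_pow _)).intervalIntegrable _ _)
    · exact Continuous.intervalIntegrable (by continuity) _ _
    · intro t ht
      have he : 1 - t ≤ Real.exp (-t) := by linarith [Real.add_one_le_exp (-t)]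
      calc t ^ n - t ^ (n+1) = t ^ n * (1 - t) := by ring
        _ ≤ t ^ n * Real.exp (-t) := mul_le_mul_of_nonneg_left he (pow_nonneg ht.1 n)
  have : x ^ (n+1) / ((n:ℕ)+1:ℝ) - x ^ (n+2) / ((n:ℕ)+2:ℝ)
      = x ^ (n+1)/((n:ℝ)+1) - x^(n+2)/((n:ℝ)+2) := by push_cast; ring
  rw [this, ← h1]; exact h2

lemma lig_mono (n : ℕ) : Monotone (lowerIncGamma ((n:ℝ) + 1)) := by
  intro x y hxy
  by_cases hx : x ≤ 0
  · rw [lig_of_nonpos _ hx]; exact lig_nonneg _ _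
  push_neg at hx
  unfold lowerIncGamma
  have hcont : Continuous fun t : ℝ => t ^ n * Real.exp (-t) := by continuity
  have hInt : IntegrableOn (fun t : ℝ => t ^ ((n:ℝ)+1-1) * Real.exp (-t)) (Ioo 0 y) := by
    refine IntegrableOn.congr_fun ((hcont.integrableOn_Icc (a := 0) (b := y)).mono_set
      Ioo_subset_Icc_self) ?_ measurableSet_Ioo
    intro t ht
    have h : ((n:ℝ) + 1) - 1 = ((n : ℕ) : ℝ) := by push_cast; ring
    simp only [h, Real.rpow_natCast]
  apply setIntegral_mono_set hInt
  · filter_upwards [ae_restrict_mem measurableSet_Ioo] with t ht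
    exact mul_nonneg (Real.rpow_nonneg ht.1.le _) (Real.exp_pos _).le
  · exact HasSubset.Subset.eventuallyLE (Ioo_subset_Ioo le_rfl hxy)

/-- with `P(λ) = E[γ(L, c₂ λ W^{-δ})]/Γ(L)`,
`P(λ) = (c₂^L E[W^{-δL}]/Γ(L+1)) λ^L + O(λ^{L+1})` as `λ → 0⁺`. -/
theorem outage_lower_bound_asymptotic
    {Ω : Type*} [MeasureSpace Ω] [IsProbabilityMeasure (ℙ : Measure Ω)]
    (L : ℕ) (hL : 1 ≤ L) (δ c₂ : ℝ) (hδ : 0 < δ) (hδ1 : δ < 1) (hc₂ : 0 < c₂)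
    (W : Ω → ℝ) (hWm : Measurable W) (hWpos : ∀ ω, 0 < W ω)
    (hint : Integrable (fun ω => (W ω) ^ (-(δ * L))) ℙ)
    (hint' : Integrable (fun ω => (W ω) ^ (-(δ * (L + 1)))) ℙ) :
    (fun lam : ℝ =>
        (∫ ω, lowerIncGamma L (c₂ * lam * (W ω) ^ (-δ))) / Real.Gamma L
          - c₂ ^ L * (∫ ω, (W ω) ^ (-(δ * L))) / Real.Gamma (L + 1) * lam ^ L)
      =O[𝓝[>] 0] fun lam => lam ^ (L + 1) := by
  obtain ⟨n, rfl⟩ : ∃ n, L = n + 1 := ⟨L - 1, by omega⟩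
  have hc1 : ((n + 1 : ℕ) : ℝ) = (n : ℝ) + 1 := by push_cast; ring
  simp only [hc1] at hint hint' ⊢
  have hΓpos : 0 < Real.Gamma ((n : ℝ) + 1) := Real.Gamma_pos_of_pos (by positivity)
  rw [Asymptotics.isBigO_iff]
  refine ⟨c₂ ^ (n + 1 + 1) * (∫ ω, (W ω) ^ (-(δ * ((n : ℝ) + 1 + 1))))
      / (((n : ℝ) + 1 + 1) * Real.Gamma ((n : ℝ) + 1)), ?_⟩
  filter_upwards [self_mem_nhdsWithin] with lam hlam
  have hlam0 : (0 : ℝ) < lam := hlam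
  have hx0 : ∀ ω : Ω, 0 ≤ c₂ * lam * W ω ^ (-δ) := fun ω =>
    mul_nonneg (mul_nonneg hc₂.le hlam0.le) (Real.rpow_nonneg (hWpos ω).le _)
  -- power identities
  have hpowL : ∀ ω : Ω, (c₂ * lam * W ω ^ (-δ)) ^ (n + 1)
      = c₂ ^ (n + 1) * lam ^ (n + 1) * W ω ^ (-(δ * ((n : ℝ) + 1))) := by
    intro ω
    rw [mul_pow, mul_pow, ← Real.rpow_natCast (W ω ^ (-δ)) (n + 1),
      ← Real.rpow_mul (hWpos ω).le]
    congr 1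
    push_cast; ring
  have hpowL1 : ∀ ω : Ω, (c₂ * lam * W ω ^ (-δ)) ^ (n + 1 + 1)
      = c₂ ^ (n + 1 + 1) * lam ^ (n + 1 + 1) * W ω ^ (-(δ * ((n : ℝ) + 1 + 1))) := by
    intro ω
    rw [mul_pow, mul_pow, ← Real.rpow_natCast (W ω ^ (-δ)) (n + 1 + 1),
      ← Real.rpow_mul (hWpos ω).le]
    congr 1
    push_cast; ring
  -- measurability and integrability
  have hWrm : Measurable fun ω => W ω ^ (-δ) := by
    have h : (fun ω : Ω => W ω ^ (-δ)) = fun ω => Real.exp (Real.log (W ω) * (-δ)) := by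
      funext ω; rw [Real.rpow_def_of_pos (hWpos ω)]
    rw [h]
    exact Real.measurable_exp.comp ((Real.measurable_log.comp hWm).mul_const _)
  have hxm : Measurable fun ω => c₂ * lam * W ω ^ (-δ) := hWrm.const_mul _
  have hg1m : Measurable fun ω => lowerIncGamma ((n : ℝ) + 1) (c₂ * lam * W ω ^ (-δ)) :=
    (lig_mono n).measurable.comp hxm
  have hxL_int : Integrable (fun ω => (c₂ * lam * W ω ^ (-δ)) ^ (n + 1)) ℙ := by
    rw [funext hpowL]; exact hint.const_mul _
  have hxL1_int : Integrable (fun ω => (c₂ * lam * W ω ^ (-δ)) ^ (n + 1 + 1)) ℙ := by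
    rw [funext hpowL1]; exact hint'.const_mul _
  have hg1i : Integrable (fun ω => lowerIncGamma ((n : ℝ) + 1) (c₂ * lam * W ω ^ (-δ))) ℙ := by
    refine (hxL_int.div_const ((n : ℝ) + 1)).mono' hg1m.aestronglyMeasurable ?_
    filter_upwards with ω
    rw [Real.norm_eq_abs, abs_of_nonneg (lig_nonneg _ _)]
    exact lig_le n _ (hx0 ω)
  -- integral identities
  have hIL : (∫ ω, (c₂ * lam * W ω ^ (-δ)) ^ (n + 1))
      = c₂ ^ (n + 1) * lam ^ (n + 1) * ∫ ω, W ω ^ (-(δ * ((n : ℝ) + 1))) := by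
    rw [funext hpowL]; exact integral_const_mul _ _
  have hIL1 : (∫ ω, (c₂ * lam * W ω ^ (-δ)) ^ (n + 1 + 1))
      = c₂ ^ (n + 1 + 1) * lam ^ (n + 1 + 1) * ∫ ω, W ω ^ (-(δ * ((n : ℝ) + 1 + 1))) := by
    rw [funext hpowL1]; exact integral_const_mul _ _
  -- key estimate
  have hsub : (∫ ω, (lowerIncGamma ((n : ℝ) + 1) (c₂ * lam * W ω ^ (-δ))
        - (c₂ * lam * W ω ^ (-δ)) ^ (n + 1) / ((n : ℝ) + 1)))
      = (∫ ω, lowerIncGamma ((n : ℝ) + 1) (c₂ * lam * W ω ^ (-δ)))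
        - (∫ ω, (c₂ * lam * W ω ^ (-δ)) ^ (n + 1)) / ((n : ℝ) + 1) := by
    rw [integral_sub hg1i (hxL_int.div_const _), integral_div]
  have key : |(∫ ω, lowerIncGamma ((n : ℝ) + 1) (c₂ * lam * W ω ^ (-δ)))
        - (∫ ω, (c₂ * lam * W ω ^ (-δ)) ^ (n + 1)) / ((n : ℝ) + 1)|
      ≤ (∫ ω, (c₂ * lam * W ω ^ (-δ)) ^ (n + 1 + 1)) / ((n : ℝ) + 1 + 1) := by
    rw [← hsub]
    calc |∫ ω, (lowerIncGamma ((n : ℝ) + 1) (c₂ * lam * W ω ^ (-δ))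
            - (c₂ * lam * W ω ^ (-δ)) ^ (n + 1) / ((n : ℝ) + 1))|
        ≤ ∫ ω, |lowerIncGamma ((n : ℝ) + 1) (c₂ * lam * W ω ^ (-δ))
            - (c₂ * lam * W ω ^ (-δ)) ^ (n + 1) / ((n : ℝ) + 1)| :=
          by simpa [Real.norm_eq_abs] using
            norm_integral_le_integral_norm (μ := ℙ) (fun ω => lowerIncGamma ((n : ℝ) + 1)
              (c₂ * lam * W ω ^ (-δ)) - (c₂ * lam * W ω ^ (-δ)) ^ (n + 1) / ((n : ℝ) + 1))
      _ ≤ ∫ ω, (c₂ * lam * W ω ^ (-δ)) ^ (n + 1 + 1) / ((n : ℝ) + 1 + 1) := by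
          refine integral_mono (hg1i.sub (hxL_int.div_const _)).abs
            (hxL1_int.div_const _) fun ω => ?_
          have h1 := lig_le n (c₂ * lam * W ω ^ (-δ)) (hx0 ω)
          have h2 := lig_ge n (c₂ * lam * W ω ^ (-δ)) (hx0 ω)
          have h3 : 0 ≤ (c₂ * lam * W ω ^ (-δ)) ^ (n + 2) / ((n : ℝ) + 2) := by
            have := hx0 ω; positivity
          have hpe : (c₂ * lam * W ω ^ (-δ)) ^ (n + 1 + 1)
              = (c₂ * lam * W ω ^ (-δ)) ^ (n + 2) := by ring
          have hd : ((n : ℝ) + 1 + 1) = ((n : ℝ) + 2) := by ring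
          rw [abs_le, hpe, hd]
          constructor <;> linarith
      _ = (∫ ω, (c₂ * lam * W ω ^ (-δ)) ^ (n + 1 + 1)) / ((n : ℝ) + 1 + 1) :=
          integral_div _ _
  -- finish
  rw [Real.Gamma_add_one (by positivity : ((n : ℝ) + 1) ≠ 0)]
  rw [Real.norm_eq_abs, Real.norm_eq_abs,
    abs_of_nonneg (by positivity : (0 : ℝ) ≤ lam ^ (n + 1 + 1))]
  have hrw : (∫ ω, lowerIncGamma ((n : ℝ) + 1) (c₂ * lam * W ω ^ (-δ))) / Real.Gamma ((n : ℝ) + 1)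
      - c₂ ^ (n + 1) * (∫ ω, W ω ^ (-(δ * ((n : ℝ) + 1)))) / (((n : ℝ) + 1) * Real.Gamma ((n : ℝ) + 1))
        * lam ^ (n + 1)
      = ((∫ ω, lowerIncGamma ((n : ℝ) + 1) (c₂ * lam * W ω ^ (-δ)))
        - (∫ ω, (c₂ * lam * W ω ^ (-δ)) ^ (n + 1)) / ((n : ℝ) + 1)) / Real.Gamma ((n : ℝ) + 1) := by
    rw [hIL]
    field_simp
  rw [hrw, abs_div, abs_of_nonneg hΓpos.le]
  calc |(∫ ω, lowerIncGamma ((n : ℝ) + 1) (c₂ * lam * W ω ^ (-δ)))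
        - (∫ ω, (c₂ * lam * W ω ^ (-δ)) ^ (n + 1)) / ((n : ℝ) + 1)| / Real.Gamma ((n : ℝ) + 1)
      ≤ ((∫ ω, (c₂ * lam * W ω ^ (-δ)) ^ (n + 1 + 1)) / ((n : ℝ) + 1 + 1)) / Real.Gamma ((n : ℝ) + 1) := by
        gcongr
    _ = c₂ ^ (n + 1 + 1) * (∫ ω, (W ω) ^ (-(δ * ((n : ℝ) + 1 + 1))))
        / (((n : ℝ) + 1 + 1) * Real.Gamma ((n : ℝ) + 1)) * lam ^ (n + 1 + 1) := by
        rw [hIL1]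
        field_simp
end
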